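/- For every x ∈ F_α one has p_{F_α}(x) ≤ ‖x‖_{F_α} for every p ∈ 𝒫 and sup_{p∈𝒫} p_{F_α}(x) = ‖x‖_{F_α}. Moreover, if (x_n) ⊆ F_α satisfies sup_n ‖x_n‖_{F_α} < ∞ and is τ_{F_α}-Cauchy (i.e. for every p ∈ 𝒫, p_{F_α}(x_n − x_m) → 0 as n,m → ∞), then there exists x ∈ F_α with p_{F_α}(x_n − x) → 0 for every p ∈ 𝒫. (Thus the triple (F_α, ‖·‖_{F_α}, τ_{F_α}) again satisfies the standing assumptions.) -/

import Mathlib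

open scoped Topology

/-- The Favard norm `‖z‖_{F_α} = sup_{t>0} t^{−α}‖T(t)z − z‖` (as a supremum in `ℝ`). -/
noncomputable def favNorm {X : Type*} [NormedAddCommGroup X] [NormedSpace ℝ X]
    (T : ℝ → X →L[ℝ] X) (α : ℝ) (z : X) : ℝ :=
  sSup ((fun t : ℝ => ‖T t z - z‖ / t ^ α) '' Set.Ioi 0)

/-- Membership in the Favard space `F_α`. -/
def memFav {X : Type*} [NormedAddCommGroup X] [NormedSpace ℝ X]
    (T : ℝ → X →L[ℝ] X) (α : ℝ) (z : X) : Prop :=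
  BddAbove ((fun t : ℝ => ‖T t z - z‖ / t ^ α) '' Set.Ioi 0)

/-- The seminorm `p_{F_α}(z) = sup_{t>0} t^{−α} p(T(t)z − z)`. -/
noncomputable def pFav {X : Type*} [NormedAddCommGroup X] [NormedSpace ℝ X]
    (T : ℝ → X →L[ℝ] X) (α : ℝ) (p : Seminorm ℝ X) (z : X) : ℝ :=
  sSup ((fun t : ℝ => p (T t z - z) / t ^ α) '' Set.Ioi 0)

/-- Membership in the space `X_α ⊆ F_α`. -/
def memX {X : Type*} [NormedAddCommGroup X] [NormedSpace ℝ X]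
    (P : Set (Seminorm ℝ X)) (T : ℝ → X →L[ℝ] X) (α : ℝ) (z : X) : Prop :=
  memFav T α z ∧
    ∀ p ∈ P, Filter.Tendsto (fun t : ℝ => p (T t z - z) / t ^ α)
      (nhdsWithin 0 (Set.Ioi 0)) (nhds 0)

open Filter in
/-- For `x ∈ F_α` one has `p_{F_α}(x) ≤ ‖x‖_{F_α}` for all `p ∈ 𝒫` and
`sup_{p∈𝒫} p_{F_α}(x) = ‖x‖_{F_α}`; moreover every `‖·‖_{F_α}`-bounded
`τ_{F_α}`-Cauchy sequence in `F_α` converges in `τ_{F_α}` to some `x ∈ F_α`. -/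
theorem statement9
    {X : Type*} [NormedAddCommGroup X] [NormedSpace ℝ X] [CompleteSpace X]
    (P : Set (Seminorm ℝ X))
    (hnorm : ∀ x : X, ‖x‖ = sSup {r : ℝ | ∃ p ∈ P, r = p x})
    (hcomplete : ∀ (u : ℕ → X) (C : ℝ), (∀ n, ‖u n‖ ≤ C) →
      (∀ p ∈ P, ∀ ε > (0:ℝ), ∃ N : ℕ, ∀ m ≥ N, ∀ n ≥ N, p (u m - u n) < ε) →
      ∃ x : X, ∀ p ∈ P, Filter.Tendsto (fun n => p (u n - x)) Filter.atTop (𝓝 0))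
    (T : ℝ → X →L[ℝ] X) (hT0 : T 0 = 1)
    (hTsg : ∀ s t : ℝ, 0 ≤ s → 0 ≤ t → T (t + s) = (T t).comp (T s))
    (M ω : ℝ) (hM : 1 ≤ M) (hω : ω < 0)
    (hgrowth : ∀ t : ℝ, 0 ≤ t → ‖T t‖ ≤ M * Real.exp (ω * t))
    (horbit : ∀ x : X, ∀ p ∈ P, ∀ t₀ : ℝ, 0 ≤ t₀ →
      Filter.Tendsto (fun t : ℝ => p (T t x - T t₀ x)) (𝓝[Set.Ici 0] t₀) (𝓝 0))
    (hbieq : ∀ (u : ℕ → X) (C : ℝ), (∀ n, ‖u n‖ ≤ C) →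
      (∀ p ∈ P, Filter.Tendsto (fun n => p (u n)) Filter.atTop (𝓝 0)) →
      ∀ t₀ > (0:ℝ), ∀ p ∈ P, ∀ ε > (0:ℝ), ∃ N : ℕ, ∀ n ≥ N, ∀ s ∈ Set.Icc (0:ℝ) t₀,
        p (T s (u n)) < ε)
    (α : ℝ) (hα : α ∈ Set.Ioo (0:ℝ) 1)
    :
    (∀ x : X, memFav T α x →
      (∀ p ∈ P, pFav T α p x ≤ favNorm T α x) ∧
      sSup {r : ℝ | ∃ p ∈ P, r = pFav T α p x} = favNorm T α x) ∧
    (∀ (u : ℕ → X) (C : ℝ), (∀ n, memFav T α (u n)) → (∀ n, favNorm T α (u n) ≤ C) →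
      (∀ p ∈ P, ∀ ε > (0:ℝ), ∃ N : ℕ, ∀ m ≥ N, ∀ n ≥ N, pFav T α p (u m - u n) < ε) →
      ∃ x : X, memFav T α x ∧
        ∀ p ∈ P, Filter.Tendsto (fun n => pFav T α p (u n - x)) Filter.atTop (𝓝 0)) := by
  
  have hα0 : (0:ℝ) < α := hα.1
  have htpow : ∀ t : ℝ, 0 < t → (0:ℝ) < t ^ α := fun t ht => Real.rpow_pos_of_pos ht α
  -- every seminorm in P is dominated by the norm
  have hple : ∀ p ∈ P, ∀ z : X, p z ≤ ‖z‖ := by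
    intro p hp z
    by_cases hb : BddAbove {r : ℝ | ∃ q ∈ P, r = q z}
    · rw [hnorm z]; exact le_csSup hb ⟨p, hp, rfl⟩
    · have hz : ‖z‖ = 0 := by rw [hnorm z, Real.sSup_of_not_bddAbove hb]
      have : z = 0 := norm_eq_zero.mp hz
      simp [this, map_zero, hz]
  have hfav_nonneg : ∀ z : X, 0 ≤ favNorm T α z := by
    intro z
    apply Real.sSup_nonneg
    rintro r ⟨t, ht, rfl⟩
    have := htpow t ht
    positivity
  have hpFav_nonneg : ∀ p : Seminorm ℝ X, ∀ z : X, 0 ≤ pFav T α p z := by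
    intro p z
    apply Real.sSup_nonneg
    rintro r ⟨t, ht, rfl⟩
    have := htpow t ht
    have := apply_nonneg p (T t z - z)
    positivity
  have hfav_bound : ∀ z : X, memFav T α z → ∀ t : ℝ, 0 < t →
      ‖T t z - z‖ ≤ favNorm T α z * t ^ α := by
    intro z hz t ht
    rw [← div_le_iff₀ (htpow t ht)]
    exact le_csSup hz ⟨t, ht, rfl⟩
  have hpA_bdd : ∀ p ∈ P, ∀ z : X, memFav T α z →
      BddAbove ((fun t : ℝ => p (T t z - z) / t ^ α) '' Set.Ioi 0) := by
    intro p hp z hz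
    refine ⟨favNorm T α z, ?_⟩
    rintro r ⟨t, ht, rfl⟩
    calc p (T t z - z) / t ^ α ≤ ‖T t z - z‖ / t ^ α := by
          gcongr
          · exact (htpow t ht).le
          · exact hple p hp _
      _ ≤ favNorm T α z := le_csSup hz ⟨t, ht, rfl⟩
  have hp_bound : ∀ p ∈ P, ∀ z : X, memFav T α z → ∀ t : ℝ, 0 < t →
      p (T t z - z) ≤ pFav T α p z * t ^ α := by
    intro p hp z hz t ht
    rw [← div_le_iff₀ (htpow t ht)]
    exact le_csSup (hpA_bdd p hp z hz) ⟨t, ht, rfl⟩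
  have hpFav_le : ∀ p ∈ P, ∀ z : X, memFav T α z → pFav T α p z ≤ favNorm T α z := by
    intro p hp z hz
    apply Real.sSup_le _ (hfav_nonneg z)
    rintro r ⟨t, ht, rfl⟩
    calc p (T t z - z) / t ^ α ≤ ‖T t z - z‖ / t ^ α := by
          gcongr
          · exact (htpow t ht).le
          · exact hple p hp _
      _ ≤ favNorm T α z := le_csSup hz ⟨t, ht, rfl⟩
  constructor
  · -- Part 1
    intro x hx
    refine ⟨fun p hp => hpFav_le p hp x hx, le_antisymm ?_ ?_⟩
    · apply Real.sSup_le _ (hfav_nonneg x)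
      rintro r ⟨p, hp, rfl⟩
      exact hpFav_le p hp x hx
    · -- favNorm ≤ sup of pFav
      set S := sSup {r : ℝ | ∃ p ∈ P, r = pFav T α p x} with hS
      have hS0 : 0 ≤ S := by
        apply Real.sSup_nonneg
        rintro r ⟨p, hp, rfl⟩
        exact hpFav_nonneg p x
      have hSbdd : BddAbove {r : ℝ | ∃ p ∈ P, r = pFav T α p x} := by
        refine ⟨favNorm T α x, ?_⟩
        rintro r ⟨p, hp, rfl⟩
        exact hpFav_le p hp x hx
      apply Real.sSup_le _ hS0
      rintro r ⟨t, ht, rfl⟩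
      rw [div_le_iff₀ (htpow t ht)]
      rw [hnorm (T t x - x)]
      apply Real.sSup_le _ (mul_nonneg hS0 (htpow t ht).le)
      rintro r ⟨p, hp, rfl⟩
      calc (p : Seminorm ℝ X) (T t x - x) ≤ pFav T α p x * t ^ α := hp_bound p hp x hx t ht
        _ ≤ S * t ^ α := by
            have : pFav T α p x ≤ S := le_csSup hSbdd ⟨p, hp, rfl⟩
            exact mul_le_mul_of_nonneg_right this (htpow t ht).le
  · -- Part 2
    intro u C hmem hbnd hcauchy
    have hC0 : 0 ≤ C := le_trans (hfav_nonneg (u 0)) (hbnd 0)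
    set t₀ : ℝ := Real.log (2 * M) / (-ω) with ht₀def
    have hlog : 0 < Real.log (2 * M) := Real.log_pos (by linarith)
    have ht₀ : 0 < t₀ := div_pos hlog (by linarith)
    have hhalf : M * Real.exp (ω * t₀) = 1 / 2 := by
      have hωne : ω ≠ 0 := ne_of_lt hω
      have : ω * t₀ = -(Real.log (2 * M)) := by
        rw [ht₀def, div_neg, mul_neg, neg_inj, mul_comm, div_mul_eq_mul_div, mul_div_assoc,
          div_self hωne, mul_one]
      rw [this, Real.exp_neg, Real.exp_log (by linarith)]
      field_simp
    have ht₀pow : 0 < t₀ ^ α := htpow t₀ ht₀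
    have hnormFav : ∀ z : X, memFav T α z → ‖z‖ ≤ 2 * favNorm T α z * t₀ ^ α := by
      intro z hz
      have h1 : ‖z - T t₀ z‖ ≤ favNorm T α z * t₀ ^ α := by
        rw [norm_sub_rev]; exact hfav_bound z hz t₀ ht₀
      have h2 : ‖T t₀ z‖ ≤ (1 / 2) * ‖z‖ := by
        calc ‖T t₀ z‖ ≤ ‖T t₀‖ * ‖z‖ := (T t₀).le_opNorm z
          _ ≤ (M * Real.exp (ω * t₀)) * ‖z‖ :=
              mul_le_mul_of_nonneg_right (hgrowth t₀ ht₀.le) (norm_nonneg z)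
          _ = (1 / 2) * ‖z‖ := by rw [hhalf]
      have h3 : ‖z‖ ≤ ‖z - T t₀ z‖ + ‖T t₀ z‖ := by
        calc ‖z‖ = ‖(z - T t₀ z) + T t₀ z‖ := by rw [sub_add_cancel]
          _ ≤ _ := norm_add_le _ _
      linarith
    set D : ℝ := 2 * C * t₀ ^ α with hDdef
    have hD0 : 0 ≤ D := by positivity
    have huD : ∀ n, ‖u n‖ ≤ D := by
      intro n
      calc ‖u n‖ ≤ 2 * favNorm T α (u n) * t₀ ^ α := hnormFav (u n) (hmem n)
        _ ≤ D := by
            rw [hDdef]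
            have := hbnd n
            nlinarith [hfav_nonneg (u n)]
    have hmemsub : ∀ z w : X, memFav T α z → memFav T α w → memFav T α (z - w) := by
      intro z w hz hw
      refine ⟨favNorm T α z + favNorm T α w, ?_⟩
      rintro r ⟨t, ht, rfl⟩
      have hid : T t (z - w) - (z - w) = (T t z - z) - (T t w - w) := by
        rw [map_sub]; abel
      rw [div_le_iff₀ (htpow t ht), hid]
      calc ‖(T t z - z) - (T t w - w)‖ ≤ ‖T t z - z‖ + ‖T t w - w‖ := norm_sub_le _ _
        _ ≤ favNorm T α z * t ^ α + favNorm T α w * t ^ α :=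
            add_le_add (hfav_bound z hz t ht) (hfav_bound w hw t ht)
        _ = (favNorm T α z + favNorm T α w) * t ^ α := by ring
    have hdecay : Tendsto (fun t : ℝ => M * Real.exp (ω * t)) atTop (𝓝 0) := by
      have h1 : Tendsto (fun t : ℝ => ω * t) atTop atBot := by
        have h2 : Tendsto (fun t : ℝ => (-ω) * t) atTop atTop :=
          tendsto_id.const_mul_atTop (by linarith)
        have h3 := tendsto_neg_atTop_atBot.comp h2
        convert h3 using 1
        funext t; simp only [Function.comp]; ring
      have h4 := Real.tendsto_exp_atBot.comp h1
      have h5 := h4.const_mul M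
      simpa using h5
    -- the sequence u is τ-Cauchy
    have hcau2 : ∀ p ∈ P, ∀ ε > (0:ℝ), ∃ N : ℕ, ∀ m ≥ N, ∀ n ≥ N, p (u m - u n) < ε := by
      intro p hp ε hε
      have hev : ∀ᶠ t in atTop, M * Real.exp (ω * t) * (2 * D) < ε / 2 := by
        have := (hdecay.mul_const (2 * D)).eventually_lt_const
          (show (0:ℝ) * (2 * D) < ε / 2 by simpa using by linarith)
        simpa using this
      obtain ⟨t, ht1, htsmall⟩ := ((eventually_ge_atTop (1:ℝ)).and hev).exists
      have ht : (0:ℝ) < t := lt_of_lt_of_le one_pos ht1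
      obtain ⟨N, hN⟩ := hcauchy p hp (ε / (2 * t ^ α)) (by positivity)
      refine ⟨N, fun m hm n hn => ?_⟩
      set z := u m - u n with hzdef
      have hzmem : memFav T α z := hmemsub _ _ (hmem m) (hmem n)
      have hznorm : ‖z‖ ≤ 2 * D := by
        calc ‖z‖ ≤ ‖u m‖ + ‖u n‖ := norm_sub_le _ _
          _ ≤ 2 * D := by have := huD m; have := huD n; linarith
      have hA : p (z - T t z) < ε / 2 := by
        have h1 : p (z - T t z) = p (T t z - z) := by
          rw [← map_neg_eq_map p]; congr 1; abel
        rw [h1]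
        calc p (T t z - z) ≤ pFav T α p z * t ^ α := hp_bound p hp z hzmem t ht
          _ < (ε / (2 * t ^ α)) * t ^ α :=
              mul_lt_mul_of_pos_right (hN m hm n hn) (htpow t ht)
          _ = ε / 2 := by field_simp
      have hB : p (T t z) < ε / 2 := by
        calc p (T t z) ≤ ‖T t z‖ := hple p hp _
          _ ≤ ‖T t‖ * ‖z‖ := (T t).le_opNorm z
          _ ≤ (M * Real.exp (ω * t)) * (2 * D) := by
              apply mul_le_mul (hgrowth t ht.le) hznorm (norm_nonneg z)
              positivity
          _ < ε / 2 := htsmall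
      calc (p : Seminorm ℝ X) z = p ((z - T t z) + T t z) := by congr 1; abel
        _ ≤ p (z - T t z) + p (T t z) := map_add_le_add p _ _
        _ < ε := by linarith
    obtain ⟨x, hx⟩ := hcomplete u D huD hcau2
    have hxD : ‖x‖ ≤ D := by
      rw [hnorm x]
      apply Real.sSup_le _ hD0
      rintro r ⟨p, hp, rfl⟩
      have hb : ∀ n, (p : Seminorm ℝ X) x - D ≤ p (u n - x) := by
        intro n
        have h1 : (p : Seminorm ℝ X) x ≤ p (u n - x) + p (u n) := by
          calc (p : Seminorm ℝ X) x = p (-(u n - x) + u n) := by congr 1; abel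
            _ ≤ p (-(u n - x)) + p (u n) := map_add_le_add p _ _
            _ = p (u n - x) + p (u n) := by rw [map_neg_eq_map]
        have h2 := hple p hp (u n)
        have h3 := huD n
        linarith
      have := ge_of_tendsto' (hx p hp) hb
      linarith
    -- norm bound for the shifted sequence
    have huxD : ∀ n, ‖u n - x‖ ≤ 2 * D := by
      intro n
      calc ‖u n - x‖ ≤ ‖u n‖ + ‖x‖ := norm_sub_le _ _
        _ ≤ 2 * D := by have := huD n; linarith
    have hueq := hbieq (fun n => u n - x) (2 * D) huxD (fun p hp => hx p hp)
    -- key: for each p, t, ε we can find n ≥ any N₀ with both quantities small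
    have hkey : ∀ p ∈ P, ∀ t : ℝ, 0 < t → ∀ ε : ℝ, 0 < ε → ∀ N₀ : ℕ,
        ∃ n ≥ N₀, (p : Seminorm ℝ X) (T t (u n - x)) < ε ∧ (p : Seminorm ℝ X) (u n - x) < ε := by
      intro p hp t ht ε hε N₀
      obtain ⟨N₁, hN₁⟩ := hueq t ht p hp ε hε
      have hev : ∀ᶠ n in atTop, (p : Seminorm ℝ X) (u n - x) < ε :=
        (hx p hp).eventually_lt_const hε
      obtain ⟨N₂, hN₂⟩ := eventually_atTop.mp hev
      refine ⟨max N₀ (max N₁ N₂), le_max_left _ _, ?_, ?_⟩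
      · exact hN₁ _ (le_trans (le_max_left _ _) (le_max_right _ _)) t ⟨ht.le, le_refl t⟩
      · exact hN₂ _ (le_trans (le_max_right _ _) (le_max_right _ _))
    -- x belongs to the Favard space
    have hclaim : ∀ t : ℝ, 0 < t → ∀ p ∈ P, (p : Seminorm ℝ X) (T t x - x) ≤ C * t ^ α := by
      intro t ht p hp
      apply le_of_forall_pos_le_add
      intro ε hε
      obtain ⟨n, -, h1, h2⟩ := hkey p hp t ht (ε / 2) (by linarith) 0
      have hid : T t x - x = (T t (u n) - u n) + ((u n - x) + -(T t (u n - x))) := by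
        rw [map_sub]; abel
      have h3 : (p : Seminorm ℝ X) (T t (u n) - u n) ≤ C * t ^ α := by
        calc (p : Seminorm ℝ X) (T t (u n) - u n) ≤ ‖T t (u n) - u n‖ := hple p hp _
          _ ≤ favNorm T α (u n) * t ^ α := hfav_bound (u n) (hmem n) t ht
          _ ≤ C * t ^ α := mul_le_mul_of_nonneg_right (hbnd n) (htpow t ht).le
      calc (p : Seminorm ℝ X) (T t x - x)
          = p ((T t (u n) - u n) + ((u n - x) + -(T t (u n - x)))) := by rw [← hid]
        _ ≤ p (T t (u n) - u n) + p ((u n - x) + -(T t (u n - x))) := map_add_le_add p _ _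
        _ ≤ p (T t (u n) - u n) + (p (u n - x) + p (-(T t (u n - x)))) := by
            have := map_add_le_add p (u n - x) (-(T t (u n - x)))
            linarith
        _ = p (T t (u n) - u n) + (p (u n - x) + p (T t (u n - x))) := by
            rw [map_neg_eq_map]
        _ ≤ C * t ^ α + ε := by linarith
    have hxmem : memFav T α x := by
      refine ⟨C, ?_⟩
      rintro r ⟨t, ht, rfl⟩
      rw [div_le_iff₀ (htpow t ht), hnorm (T t x - x)]
      apply Real.sSup_le _ (mul_nonneg hC0 (htpow t ht).le)
      rintro r ⟨p, hp, rfl⟩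
      exact hclaim t ht p hp
    refine ⟨x, hxmem, ?_⟩
    intro p hp
    rw [Metric.tendsto_atTop]
    intro ε hε
    obtain ⟨N, hN⟩ := hcauchy p hp (ε / 2) (by linarith)
    refine ⟨N, fun m hm => ?_⟩
    have hle : pFav T α p (u m - x) ≤ ε / 2 := by
      apply Real.sSup_le _ (by linarith)
      rintro r ⟨t, ht, rfl⟩
      rw [div_le_iff₀ (htpow t ht)]
      apply le_of_forall_pos_le_add
      intro δ hδ
      obtain ⟨n, hn, h1, h2⟩ := hkey p hp t ht (δ / 2) (by linarith) N
      have hid : T t (u m - x) - (u m - x)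
          = (T t (u m - u n) - (u m - u n)) + (T t (u n - x) + -(u n - x)) := by
        rw [map_sub, map_sub, map_sub]; abel
      have h3 : (p : Seminorm ℝ X) (T t (u m - u n) - (u m - u n)) ≤ (ε / 2) * t ^ α := by
        calc (p : Seminorm ℝ X) (T t (u m - u n) - (u m - u n))
            ≤ pFav T α p (u m - u n) * t ^ α :=
              hp_bound p hp _ (hmemsub _ _ (hmem m) (hmem n)) t ht
          _ ≤ (ε / 2) * t ^ α :=
              mul_le_mul_of_nonneg_right (hN m hm n hn).le (htpow t ht).le
      calc (p : Seminorm ℝ X) (T t (u m - x) - (u m - x))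
          = p ((T t (u m - u n) - (u m - u n)) + (T t (u n - x) + -(u n - x))) := by rw [← hid]
        _ ≤ p (T t (u m - u n) - (u m - u n)) + p (T t (u n - x) + -(u n - x)) :=
            map_add_le_add p _ _
        _ ≤ p (T t (u m - u n) - (u m - u n)) + (p (T t (u n - x)) + p (-(u n - x))) := by
            have := map_add_le_add p (T t (u n - x)) (-(u n - x))
            linarith
        _ = p (T t (u m - u n) - (u m - u n)) + (p (T t (u n - x)) + p (u n - x)) := by
            rw [map_neg_eq_map]
        _ ≤ (ε / 2) * t ^ α + δ := by linarith
    have hnn := hpFav_nonneg p (u m - x)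
    rw [Real.dist_eq, sub_zero, abs_of_nonneg hnn]
    linarith
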